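/- There exists a term rewrite system R (for example R = { a → f(b,b), a → f(b,c), b → c, c → b }) such that both the full rewrite relation →_R and the innermost rewrite relation →i are confluent, but the parallel-innermost rewrite relation ⇉ is not confluent. -/

import Mathlib

namespace ParallelComplexity

/-! ## First-order terms -/

inductive Term (σ : Type) (V : Type) : Type where
  | var : V → Term σ V
  | fn : σ → List (Term σ V) → Term σ V

variable {σ V : Type}

mutual
  /-- Application of a substitution to a term. -/
  def Term.subst (θ : V → Term σ V) : Term σ V → Term σ V
    | Term.var x => θ x
    | Term.fn f ts => Term.fn f (Term.substList θ ts)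
  def Term.substList (θ : V → Term σ V) : List (Term σ V) → List (Term σ V)
    | [] => []
    | t :: ts => Term.subst θ t :: Term.substList θ ts
end

mutual
  /-- The size |t| of a term. -/
  def Term.size : Term σ V → ℕ
    | Term.var _ => 1
    | Term.fn _ ts => 1 + Term.sizeList ts
  def Term.sizeList : List (Term σ V) → ℕ
    | [] => 0
    | t :: ts => Term.size t + Term.sizeList ts
end

/-- Subterm `t|π` at a position (positions are lists of argument indices);
`none` if the position is not a position of `t`. -/
def Term.subtermAt : Term σ V → List ℕ → Option (Term σ V)
  | t, [] => some t
  | Term.var _, _ :: _ => none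
  | Term.fn _ ts, i :: π =>
    match ts[i]? with
    | none => none
    | some u => Term.subtermAt u π

/-- `t[s]π`: replacement of the subterm at position `π` by `s`. -/
def Term.replaceAt : Term σ V → List ℕ → Term σ V → Option (Term σ V)
  | _, [], s => some s
  | Term.var _, _ :: _, _ => none
  | Term.fn f ts, i :: π, s =>
    match ts[i]? with
    | none => none
    | some u =>
      match Term.replaceAt u π s with
      | none => none
      | some u' => some (Term.fn f (ts.set i u'))

def Term.isVar (t : Term σ V) : Prop := ∃ x, t = Term.var x

/-- `x` occurs as a variable in the term. -/
inductive Term.VarIn (x : V) : Term σ V → Prop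
  | var : Term.VarIn x (Term.var x)
  | fn {f : σ} {ts : List (Term σ V)} {t : Term σ V} :
      t ∈ ts → Term.VarIn x t → Term.VarIn x (Term.fn f ts)

/-! ## Term rewrite systems -/

structure Rule (σ V : Type) where
  lhs : Term σ V
  rhs : Term σ V

/-- A well-formed TRS: a finite set of rules `ℓ → r` with `ℓ ∉ V` and
`Var(r) ⊆ Var(ℓ)`. -/
def IsWfTRS (R : Set (Rule σ V)) : Prop :=
  R.Finite ∧ (∀ r ∈ R, ¬ r.lhs.isVar) ∧
    ∀ r ∈ R, ∀ x : V, Term.VarIn x r.rhs → Term.VarIn x r.lhs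

def IsRedex (R : Set (Rule σ V)) (t : Term σ V) : Prop :=
  ∃ r ∈ R, ∃ θ : V → Term σ V, t = Term.subst θ r.lhs

/-- An innermost redex: a redex none of whose proper subterms is a redex. -/
def IsInnermostRedex (R : Set (Rule σ V)) (t : Term σ V) : Prop :=
  IsRedex R t ∧
    ∀ π : List ℕ, π ≠ [] → ∀ u, t.subtermAt π = some u → ¬ IsRedex R u

/-- One rewrite step at position `π`. -/
def RewriteAt (R : Set (Rule σ V)) (π : List ℕ) (s t : Term σ V) : Prop :=
  ∃ r ∈ R, ∃ θ : V → Term σ V,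
    s.subtermAt π = some (Term.subst θ r.lhs) ∧
    s.replaceAt π (Term.subst θ r.rhs) = some t

/-- The rewrite relation `s →_R t`. -/
def Rewrite (R : Set (Rule σ V)) (s t : Term σ V) : Prop := ∃ π, RewriteAt R π s t

/-- The innermost rewrite relation `s →i t`. -/
def InnermostRewrite (R : Set (Rule σ V)) (s t : Term σ V) : Prop :=
  ∃ π, ∃ r ∈ R, ∃ θ : V → Term σ V,
    s.subtermAt π = some (Term.subst θ r.lhs) ∧
    IsInnermostRedex R (Term.subst θ r.lhs) ∧
    s.replaceAt π (Term.subst θ r.rhs) = some t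

def NormalForm (R : Set (Rule σ V)) (t : Term σ V) : Prop := ¬ ∃ u, Rewrite R t u

/-- Parallel-innermost rewriting `s ⇉ t`: `s →i⁺ t` and either
(a) `s` is an innermost redex and `s →i t`, or (b) `s = f(s₁,…,sₙ)`,
`t = f(t₁,…,tₙ)` and each `sₖ ⇉ tₖ` or `sₖ = tₖ` is a normal form. -/
inductive ParInnermost (R : Set (Rule σ V)) : Term σ V → Term σ V → Prop
  | redex {s t : Term σ V} :
      Relation.TransGen (InnermostRewrite R) s t →
      IsInnermostRedex R s → InnermostRewrite R s t → ParInnermost R s t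
  | congr (f : σ) (ss ts : List (Term σ V)) :
      Relation.TransGen (InnermostRewrite R) (Term.fn f ss) (Term.fn f ts) →
      ss.length = ts.length →
      -- each `sₖ ⇉ tₖ`, or `sₖ = tₖ` is a normal form (stated as the
      -- classically equivalent implication to satisfy the kernel's
      -- restrictions on nested inductive occurrences)
      (∀ p ∈ ss.zip ts, ¬ (p.1 = p.2 ∧ NormalForm R p.1) → ParInnermost R p.1 p.2) →
      ParInnermost R (Term.fn f ss) (Term.fn f ts)

/-! ## Abstract properties of relations -/

def Confluent {α : Type} (r : α → α → Prop) : Prop :=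
  ∀ s t u, Relation.ReflTransGen r s t → Relation.ReflTransGen r s u →
    ∃ v, Relation.ReflTransGen r t v ∧ Relation.ReflTransGen r u v

def Deterministic {α : Type} (r : α → α → Prop) : Prop :=
  ∀ s t u, r s t → r s u → t = u

def UniformlyConfluent {α : Type} (r : α → α → Prop) : Prop :=
  ∀ s t u, r s t → r s u → t = u ∨ ∃ v, r t v ∧ r u v

/-! ## Derivation height and runtime complexity -/

/-- `e`-th iterate of a relation. -/
def iterRel {α : Type} (r : α → α → Prop) : ℕ → α → α → Prop
  | 0 => fun a b => a = b
  | n + 1 => fun a c => ∃ b, r a b ∧ iterRel r n b c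

/-- Derivation height `Dh(t, →) = sup { e | ∃ t'. t →^e t' } ∈ ℕ ∪ {ω}`. -/
noncomputable def Dh {α : Type} (r : α → α → Prop) (t : α) : ℕ∞ :=
  sSup { e : ℕ∞ | ∃ n : ℕ, e = (n : ℕ∞) ∧ ∃ t', iterRel r n t t' }

/-- Defined symbols: root symbols of left-hand sides. -/
def Defined (R : Set (Rule σ V)) (f : σ) : Prop :=
  ∃ r ∈ R, ∃ ts : List (Term σ V), r.lhs = Term.fn f ts

def HasDefinedRoot (R : Set (Rule σ V)) (t : Term σ V) : Prop :=
  ∃ f ts, t = Term.fn f ts ∧ Defined R f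

/-- Constructor terms: terms over constructor symbols and variables. -/
inductive ConsTerm (R : Set (Rule σ V)) : Term σ V → Prop
  | var (x : V) : ConsTerm R (Term.var x)
  | fn (f : σ) (ts : List (Term σ V)) :
      ¬ Defined R f → (∀ t ∈ ts, ConsTerm R t) → ConsTerm R (Term.fn f ts)

/-- Basic terms: a defined symbol applied to constructor terms. -/
def BasicTerm (R : Set (Rule σ V)) (t : Term σ V) : Prop :=
  ∃ f ts, t = Term.fn f ts ∧ Defined R f ∧ ∀ u ∈ ts, ConsTerm R u

/-- Innermost runtime complexity. -/
noncomputable def irc (R : Set (Rule σ V)) (n : ℕ) : ℕ∞ :=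
  sSup { d : ℕ∞ | ∃ t, BasicTerm R t ∧ t.size ≤ n ∧ d = Dh (InnermostRewrite R) t }

/-- Parallel-innermost runtime complexity. -/
noncomputable def pirc (R : Set (Rule σ V)) (n : ℕ) : ℕ∞ :=
  sSup { d : ℕ∞ | ∃ t, BasicTerm R t ∧ t.size ≤ n ∧ d = Dh (ParInnermost R) t }

/-! ## Critical pairs -/

def RuleVars (r : Rule σ V) : Set V :=
  { x | Term.VarIn x r.lhs ∨ Term.VarIn x r.rhs }

/-- `r₂` is a variant of `r₁` (each is a substitution instance of the other). -/
def IsVariantOf (r₁ r₂ : Rule σ V) : Prop :=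
  ∃ θ₁ θ₂ : V → Term σ V,
    r₂.lhs = Term.subst θ₁ r₁.lhs ∧ r₂.rhs = Term.subst θ₁ r₁.rhs ∧
    r₁.lhs = Term.subst θ₂ r₂.lhs ∧ r₁.rhs = Term.subst θ₂ r₂.rhs

def Unifies (θ : V → Term σ V) (s t : Term σ V) : Prop :=
  Term.subst θ s = Term.subst θ t

def IsMGU (μ : V → Term σ V) (s t : Term σ V) : Prop :=
  Unifies μ s t ∧
    ∀ δ : V → Term σ V, Unifies δ s t →
      ∃ δ' : V → Term σ V, ∀ x : V, Term.subst δ' (μ x) = δ x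

/-- Critical pairs `⟨uσ[rσ]π, vσ⟩` of a TRS, from variable-renamed copies
`ℓ → r` and `u → v` of rules of `R` overlapping at a non-variable position
`π` of `u` (not a root overlap of variants of the same rule). -/
def CriticalPair (R : Set (Rule σ V)) (cp : Term σ V × Term σ V) : Prop :=
  ∃ r₁ r₂ r₁' r₂' : Rule σ V, r₁' ∈ R ∧ r₂' ∈ R ∧
    IsVariantOf r₁' r₁ ∧ IsVariantOf r₂' r₂ ∧
    (∀ x : V, x ∈ RuleVars r₁ → x ∉ RuleVars r₂) ∧
    ∃ (π : List ℕ) (u' : Term σ V),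
      r₂.lhs.subtermAt π = some u' ∧ ¬ u'.isVar ∧
      (π = [] → ¬ IsVariantOf r₁ r₂) ∧
      ∃ μ : V → Term σ V, IsMGU μ r₁.lhs u' ∧
        ∃ w : Term σ V,
          (Term.subst μ r₂.lhs).replaceAt π (Term.subst μ r₁.rhs) = some w ∧
          cp = (w, Term.subst μ r₂.rhs)

/-- `R` is non-overlapping iff it has no critical pairs. -/
def NonOverlapping (R : Set (Rule σ V)) : Prop := ∀ cp, ¬ CriticalPair R cp

/-- An innermost critical overlay: a critical pair at the root position whose
critical peak consists of two innermost rewrite steps. -/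
def InnermostCriticalOverlay (R : Set (Rule σ V)) (cp : Term σ V × Term σ V) : Prop :=
  ∃ r₁ r₂ r₁' r₂' : Rule σ V, r₁' ∈ R ∧ r₂' ∈ R ∧
    IsVariantOf r₁' r₁ ∧ IsVariantOf r₂' r₂ ∧
    (∀ x : V, x ∈ RuleVars r₁ → x ∉ RuleVars r₂) ∧
    ¬ IsVariantOf r₁ r₂ ∧
    ∃ μ : V → Term σ V, IsMGU μ r₁.lhs r₂.lhs ∧
      IsInnermostRedex R (Term.subst μ r₂.lhs) ∧
      cp = (Term.subst μ r₁.rhs, Term.subst μ r₂.rhs)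

/-! ## Positions with defined symbols and structural dependency chains -/

/-- Strict prefix order on positions: `PosGT τ π` iff `τ > π`,
i.e. `∃ π' ≠ ε, π π' = τ`. -/
def PosGT (τ π : List ℕ) : Prop := ∃ π' : List ℕ, π' ≠ [] ∧ π ++ π' = τ

/-- `PosD(t)`: positions of `t` with defined root symbol. -/
def PosD (R : Set (Rule σ V)) (t : Term σ V) : Set (List ℕ) :=
  { π | ∃ u, t.subtermAt π = some u ∧ HasDefinedRoot R u }

/-- Structural dependency chain `⟨π₁,…,πₖ⟩` for `t`: positions in `PosD(t)`
with `π₁ > … > πₖ`. -/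
def SDChain (R : Set (Rule σ V)) (t : Term σ V) (c : List (List ℕ)) : Prop :=
  (∀ π ∈ c, π ∈ PosD R t) ∧ c.Chain' PosGT

/-- Maximal structural dependency chains: `MSDC R t c` iff `c` is a maximal
structural dependency chain for `t`. -/
def MSDC (R : Set (Rule σ V)) (t : Term σ V) (c : List (List ℕ)) : Prop :=
  SDChain R t c ∧
    ((c = [] ∧ PosD R t = ∅) ∨
      ∃ (π₁ : List ℕ) (rest : List (List ℕ)), c = π₁ :: rest ∧
        ∀ π ∈ PosD R t, ¬ PosGT π π₁ ∧ (PosGT π₁ π → π ∈ rest))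

/-! ## Sharp terms, dependency tuples -/

/-- Extended signature: base symbols, sharp symbols `f#`, compound symbols `Com_n`. -/
inductive SharpSym (σ : Type) : Type where
  | base : σ → SharpSym σ
  | sharp : σ → SharpSym σ
  | com : ℕ → SharpSym σ

mutual
  def Term.embed : Term σ V → Term (SharpSym σ) V
    | Term.var x => Term.var x
    | Term.fn f ts => Term.fn (SharpSym.base f) (Term.embedList ts)
  def Term.embedList : List (Term σ V) → List (Term (SharpSym σ) V)
    | [] => []
    | t :: ts => Term.embed t :: Term.embedList ts
end

open Classical in
/-- `t#`: mark the root of `t` with its sharp symbol (if defined). -/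
noncomputable def Term.sharp (R : Set (Rule σ V)) : Term σ V → Term (SharpSym σ) V
  | Term.var x => Term.var x
  | Term.fn f ts =>
    if Defined R f then Term.fn (SharpSym.sharp f) (Term.embedList ts)
    else Term.fn (SharpSym.base f) (Term.embedList ts)

open Classical in
/-- Sharping on terms over the extended signature: for `t = f(…)` with `f` a
defined (base) symbol of `R`, mark the root; otherwise `t# = t`. -/
noncomputable def sharpC (R : Set (Rule σ V)) : Term (SharpSym σ) V → Term (SharpSym σ) V
  | Term.fn (SharpSym.base f) ts =>
    if Defined R f then Term.fn (SharpSym.sharp f) ts else Term.fn (SharpSym.base f) ts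
  | t => t

def liftRule (r : Rule σ V) : Rule (SharpSym σ) V :=
  { lhs := r.lhs.embed, rhs := r.rhs.embed }

def liftRules (R : Set (Rule σ V)) : Set (Rule (SharpSym σ) V) := liftRule '' R

/-- The dependency tuple `ℓ# → Com_k(u₁#,…,uₖ#)` built from subterms `u₁,…,uₖ`
of the right-hand side. -/
noncomputable def mkDT (R : Set (Rule σ V)) (ρ : Rule σ V) (us : List (Term σ V)) :
    Rule (SharpSym σ) V :=
  { lhs := Term.sharp R ρ.lhs,
    rhs := Term.fn (SharpSym.com us.length) (us.map (Term.sharp R)) }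

/-- `DTpar(ℓ → r)`: one dependency tuple per maximal structural dependency chain. -/
def DTparRule (R : Set (Rule σ V)) (ρ : Rule σ V) : Set (Rule (SharpSym σ) V) :=
  { d | ∃ (c : List (List ℕ)) (us : List (Term σ V)),
      MSDC R ρ.rhs c ∧
      List.Forall₂ (fun π u => ρ.rhs.subtermAt π = some u) c us ∧
      d = mkDT R ρ us }

/-- `DTpar(R)`. -/
def DTparSet (R : Set (Rule σ V)) : Set (Rule (SharpSym σ) V) :=
  ⋃ ρ ∈ R, DTparRule R ρ

/-! ## Chain trees and Cplx -/

/-- A (possibly infinite, finitely branching) tree whose nodes (addressed by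
paths) are labelled with a dependency tuple and a substitution; the child at
direction `i` corresponds to argument `i` of the `Com` symbol. -/
structure ChainTree (σ V : Type) where
  label : List ℕ → Option (Rule (SharpSym σ) V × (V → Term (SharpSym σ) V))

/-- `T` is a `(D,R)`-chain tree for the sharp term `t`. -/
def IsChainTree (D R : Set (Rule (SharpSym σ) V)) (T : ChainTree σ V)
    (t : Term (SharpSym σ) V) : Prop :=
  (∃ r ν, T.label [] = some (r, ν) ∧ Term.subst ν r.lhs = t) ∧
  (∀ (p : List ℕ) (i : ℕ), T.label (p ++ [i]) ≠ none → T.label p ≠ none) ∧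
  (∀ (p : List ℕ) (r : Rule (SharpSym σ) V) (ν : V → Term (SharpSym σ) V),
    T.label p = some (r, ν) →
      r ∈ D ∧ NormalForm R (Term.subst ν r.lhs) ∧
      ∀ (i : ℕ) (r' : Rule (SharpSym σ) V) (δ : V → Term (SharpSym σ) V),
        T.label (p ++ [i]) = some (r', δ) →
          ∃ (m : ℕ) (vs : List (Term (SharpSym σ) V)),
            r.rhs = Term.fn (SharpSym.com m) vs ∧
            ∃ v, vs[i]? = some v ∧
              Relation.ReflTransGen (InnermostRewrite R)
                (Term.subst ν v) (Term.subst δ r'.lhs))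

/-- `|T|_S`: the number of nodes of `T` labelled with a DT from `S`. -/
noncomputable def treeCount (T : ChainTree σ V) (S : Set (Rule (SharpSym σ) V)) : ℕ∞ :=
  Set.encard { p : List ℕ | ∃ r ν, T.label p = some (r, ν) ∧ r ∈ S }

/-- `Cplx⟨D,S,R⟩(t)`: the supremum of `|T|_S` over all `(D,R)`-chain trees `T`
for `t` (`0` if there is no chain tree). -/
noncomputable def Cplx (D S R : Set (Rule (SharpSym σ) V))
    (t : Term (SharpSym σ) V) : ℕ∞ :=
  sSup { c : ℕ∞ | ∃ T : ChainTree σ V, IsChainTree D R T t ∧ c = treeCount T S }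

/-- `irc⟨D,S,R⟩(n)`: runtime complexity of a DT problem. -/
noncomputable def ircDTP (D S : Set (Rule (SharpSym σ) V)) (R : Set (Rule σ V))
    (n : ℕ) : ℕ∞ :=
  sSup { c : ℕ∞ | ∃ t : Term σ V, BasicTerm R t ∧ t.size ≤ n ∧
    c = Cplx D S (liftRules R) (Term.sharp R t) }

/-! ## Relative rewriting -/

/-- An innermost rewrite step using a rule from `X`, with innermost-ness
relative to the whole system `W`. -/
def InnermostRewriteSub (W X : Set (Rule σ V)) (s t : Term σ V) : Prop :=
  ∃ π, ∃ r ∈ X, ∃ θ : V → Term σ V,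
    s.subtermAt π = some (Term.subst θ r.lhs) ∧
    IsInnermostRedex W (Term.subst θ r.lhs) ∧
    s.replaceAt π (Term.subst θ r.rhs) = some t

/-- Innermost relative rewriting `→i_{A/B}`:
`s →B* s' →A s'' →B* t`, all steps innermost wrt `A ∪ B`. -/
def RelInnermost (A B : Set (Rule σ V)) (s t : Term σ V) : Prop :=
  ∃ s' s'' : Term σ V,
    Relation.ReflTransGen (InnermostRewriteSub (A ∪ B) B) s s' ∧
    InnermostRewriteSub (A ∪ B) A s' s'' ∧
    Relation.ReflTransGen (InnermostRewriteSub (A ∪ B) B) s'' t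

/-- Innermost runtime complexity of a relative TRS `A/B`. -/
noncomputable def ircRel (A B : Set (Rule σ V)) (n : ℕ) : ℕ∞ :=
  sSup { d : ℕ∞ | ∃ t : Term σ V, BasicTerm (A ∪ B) t ∧ t.size ≤ n ∧
    d = Dh (RelInnermost A B) t }

/-! ## Dependency tuples (abstract DT problems) -/

inductive IsBaseTerm : Term (SharpSym σ) V → Prop
  | var (x : V) : IsBaseTerm (Term.var x)
  | fn (f : σ) (ts : List (Term (SharpSym σ) V)) :
      (∀ t ∈ ts, IsBaseTerm t) → IsBaseTerm (Term.fn (SharpSym.base f) ts)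

def IsSharpTerm (t : Term (SharpSym σ) V) : Prop :=
  ∃ (f : σ) (args : List (Term (SharpSym σ) V)),
    t = Term.fn (SharpSym.sharp f) args ∧ ∀ a ∈ args, IsBaseTerm a

/-- A dependency tuple: a rule `s# → Com_n(t₁#,…,tₙ#)`. -/
def IsDT (r : Rule (SharpSym σ) V) : Prop :=
  IsSharpTerm r.lhs ∧
    ∃ (n : ℕ) (ts : List (Term (SharpSym σ) V)),
      r.rhs = Term.fn (SharpSym.com n) ts ∧ ts.length = n ∧ ∀ t ∈ ts, IsSharpTerm t

/-! ## Argument normal forms -/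

/-- Argument normal form: a variable, or a term all of whose direct arguments
are normal forms. -/
def ArgNF (R : Set (Rule σ V)) (t : Term σ V) : Prop :=
  (∃ x, t = Term.var x) ∨ ∃ f ts, t = Term.fn f ts ∧ ∀ u ∈ ts, NormalForm R u

/-- A parallel-innermost step all of whose rewrites are at positions strictly
below the root. -/
def ParInnermostBelow (R : Set (Rule σ V)) (s t : Term σ V) : Prop :=
  ParInnermost R s t ∧ ¬ IsInnermostRedex R s

/-- `b` is a maximal parallel argument normal form of `u`. -/
noncomputable def MaxANF (R : Set (Rule σ V)) (u b : Term σ V) : Prop :=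
  ArgNF R b ∧ Relation.ReflTransGen (ParInnermostBelow R) u b ∧
    ∀ u', ArgNF R u' → Relation.ReflTransGen (ParInnermostBelow R) u u' →
      Dh (ParInnermost R) u' ≤ Dh (ParInnermost R) b

/-! ## Many-sorted type assignments -/

/-- Well-typedness of a term wrt a sort set `St`, a type assignment `arty`
(argument sorts and result sort for each symbol) and variable typing `vty`. -/
inductive WellTyped {τ : Type} (St : Type) (arty : τ → List St × St) (vty : V → St) :
    Term τ V → St → Prop
  | var (x : V) : WellTyped St arty vty (Term.var x) (vty x)
  | fn (f : τ) (ts : List (Term τ V)) :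
      ts.length = (arty f).1.length →
      (∀ p ∈ ts.zip (arty f).1, WellTyped St arty vty p.1 p.2) →
      WellTyped St arty vty (Term.fn f ts) (arty f).2

/-- A strict total order on positions extending the strict prefix order. -/
def TotalExtOfPrefix (gt' : List ℕ → List ℕ → Prop) : Prop :=
  (∀ π τ, PosGT π τ → gt' π τ) ∧
  (∀ π τ ρ, gt' π τ → gt' τ ρ → gt' π ρ) ∧
  (∀ π τ, gt' π τ → ¬ gt' τ π) ∧
  (∀ π τ, π ≠ τ → gt' π τ ∨ gt' τ π)


/-! ## Auxiliary development for Statement 18 -/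

namespace Ex18

inductive Sym : Type where
  | a | b | f | s
deriving DecidableEq

abbrev Tm := Term Sym Empty

def A : Tm := Term.fn Sym.a []
def B : Tm := Term.fn Sym.b []
def Sp (t : Tm) : Tm := Term.fn Sym.s [t]
def Fp (t u : Tm) : Tm := Term.fn Sym.f [t, u]

def r1 : Rule Sym Empty := ⟨A, Fp B B⟩
def r2 : Rule Sym Empty := ⟨A, Fp B (Sp B)⟩
def r3 : Rule Sym Empty := ⟨B, Sp B⟩

def RR : Set (Rule Sym Empty) := {r1, r2, r3}

lemma mem_RR {r : Rule Sym Empty} : r ∈ RR ↔ r = r1 ∨ r = r2 ∨ r = r3 := by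
  simp [RR]

@[simp] lemma subst_A (θ : Empty → Tm) : Term.subst θ A = A := by
  simp [A, Term.subst, Term.substList]

@[simp] lemma subst_B (θ : Empty → Tm) : Term.subst θ B = B := by
  simp [B, Term.subst, Term.substList]

@[simp] lemma subst_SB (θ : Empty → Tm) : Term.subst θ (Sp B) = Sp B := by
  simp [Sp, B, Term.subst, Term.substList]

@[simp] lemma subst_FBB (θ : Empty → Tm) : Term.subst θ (Fp B B) = Fp B B := by
  simp [Fp, B, Term.subst, Term.substList]

@[simp] lemma subst_FBSB (θ : Empty → Tm) :
    Term.subst θ (Fp B (Sp B)) = Fp B (Sp B) := by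
  simp [Fp, Sp, B, Term.subst, Term.substList]

/-- Every redex of `RR` is the constant `A` or `B`. -/
lemma isRedex_iff {t : Tm} : IsRedex RR t ↔ t = A ∨ t = B := by
  constructor
  · rintro ⟨r, hr, θ, rfl⟩
    rcases mem_RR.1 hr with rfl | rfl | rfl <;> simp [r1, r2, r3]
  · rintro (rfl | rfl)
    · exact ⟨r1, by simp [mem_RR], fun x => x.elim, by simp [r1]⟩
    · exact ⟨r3, by simp [mem_RR], fun x => x.elim, by simp [r3]⟩

lemma subtermAt_const {g : Sym} {π : List ℕ} (hπ : π ≠ []) :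
    Term.subtermAt (Term.fn g [] : Tm) π = none := by
  cases π with
  | nil => exact absurd rfl hπ
  | cons i π => simp [Term.subtermAt]

lemma innermost_A : IsInnermostRedex RR A := by
  refine ⟨isRedex_iff.2 (Or.inl rfl), fun π hπ u hu => ?_⟩
  rw [A, subtermAt_const hπ] at hu; exact absurd hu (by simp)

lemma innermost_B : IsInnermostRedex RR B := by
  refine ⟨isRedex_iff.2 (Or.inr rfl), fun π hπ u hu => ?_⟩
  rw [B, subtermAt_const hπ] at hu; exact absurd hu (by simp)

/-- A structural characterization of one rewrite step of `RR`. -/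
inductive St : Tm → Tm → Prop
  | ra : St A (Fp B B)
  | ra' : St A (Fp B (Sp B))
  | rb : St B (Sp B)
  | cong {g : Sym} {ts : List Tm} {i : ℕ} {t t' : Tm} :
      ts[i]? = some t → St t t' → St (Term.fn g ts) (Term.fn g (ts.set i t'))

lemma rewriteAt_cons_iff {g : Sym} {ts : List Tm} {i : ℕ} {π : List ℕ} {u : Tm} :
    RewriteAt RR (i :: π) (Term.fn g ts) u ↔
      ∃ t t', ts[i]? = some t ∧ RewriteAt RR π t t' ∧ u = Term.fn g (ts.set i t') := by
  constructor
  · rintro ⟨r, hr, θ, h1, h2⟩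
    cases hts : ts[i]? with
    | none => simp [Term.subtermAt, hts] at h1
    | some t =>
      simp only [Term.subtermAt, Term.replaceAt, hts] at h1 h2
      cases hrep : Term.replaceAt t π (Term.subst θ r.rhs) with
      | none => rw [hrep] at h2; simp at h2
      | some t' =>
        rw [hrep] at h2
        simp only [Option.some.injEq] at h2
        exact ⟨t, t', rfl, ⟨r, hr, θ, h1, hrep⟩, h2.symm⟩
  · rintro ⟨t, t', hts, ⟨r, hr, θ, h1, h2⟩, rfl⟩
    refine ⟨r, hr, θ, ?_, ?_⟩
    · simp only [Term.subtermAt, hts]; exact h1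
    · simp only [Term.replaceAt, hts, h2]

lemma rewrite_iff_st {t u : Tm} : Rewrite RR t u ↔ St t u := by
  constructor
  · rintro ⟨π, hπ⟩
    induction π generalizing t u with
    | nil =>
      obtain ⟨r, hr, θ, h1, h2⟩ := hπ
      simp only [Term.subtermAt] at h1
      simp only [Term.replaceAt] at h2
      obtain rfl := Option.some.inj h1
      obtain rfl := (Option.some.inj h2).symm
      rcases mem_RR.1 hr with rfl | rfl | rfl
      · simpa [r1, A, B, Fp, Sp, Term.subst, Term.substList] using St.ra
      · simpa [r2, A, B, Fp, Sp, Term.subst, Term.substList] using St.ra'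
      · simpa [r3, A, B, Fp, Sp, Term.subst, Term.substList] using St.rb
    | cons i π ih =>
      cases t with
      | var x => exact x.elim
      | fn g ts =>
        obtain ⟨t, t', hts, hR, rfl⟩ := rewriteAt_cons_iff.1 hπ
        exact St.cong hts (ih hR)
  · intro h
    induction h with
    | ra =>
      exact ⟨[], r1, by simp [mem_RR], fun x => x.elim,
        by simp [r1, A, B, Fp, Term.subtermAt, Term.subst, Term.substList],
        by simp [r1, A, B, Fp, Term.replaceAt, Term.subst, Term.substList]⟩
    | ra' =>
      exact ⟨[], r2, by simp [mem_RR], fun x => x.elim,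
        by simp [r2, A, B, Fp, Sp, Term.subtermAt, Term.subst, Term.substList],
        by simp [r2, A, B, Fp, Sp, Term.replaceAt, Term.subst, Term.substList]⟩
    | rb =>
      exact ⟨[], r3, by simp [mem_RR], fun x => x.elim,
        by simp [r3, A, B, Sp, Term.subtermAt, Term.subst, Term.substList],
        by simp [r3, A, B, Sp, Term.replaceAt, Term.subst, Term.substList]⟩
    | @cong g ts i t t' hts _ ih =>
      obtain ⟨π, hπ⟩ := ih
      exact ⟨i :: π, rewriteAt_cons_iff.2 ⟨t, t', hts, hπ, rfl⟩⟩

lemma innermost_iff_rewrite {t u : Tm} :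
    InnermostRewrite RR t u ↔ Rewrite RR t u := by
  constructor
  · rintro ⟨π, r, hr, θ, h1, _, h2⟩
    exact ⟨π, r, hr, θ, h1, h2⟩
  · rintro ⟨π, r, hr, θ, h1, h2⟩
    refine ⟨π, r, hr, θ, h1, ?_, h2⟩
    have hred : IsRedex RR (Term.subst θ r.lhs) := ⟨r, hr, θ, rfl⟩
    rcases isRedex_iff.1 hred with h | h
    · rw [h]; exact innermost_A
    · rw [h]; exact innermost_B

/-! ### Size increases along rewriting -/

lemma sizeList_set {ts : List Tm} {i : ℕ} {t t' : Tm}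
    (hts : ts[i]? = some t) (h : t.size < t'.size) :
    Term.sizeList ts < Term.sizeList (ts.set i t') := by
  induction ts generalizing i with
  | nil => simp at hts
  | cons x xs ih =>
    cases i with
    | zero =>
      simp only [List.getElem?_cons_zero, Option.some.injEq] at hts
      subst hts
      simp only [List.set_cons_zero, Term.sizeList]
      omega
    | succ i =>
      simp only [List.getElem?_cons_succ] at hts
      have := ih hts
      simp only [List.set_cons_succ, Term.sizeList]
      omega

lemma size_lt_of_st {t u : Tm} (h : St t u) : t.size < u.size := by
  induction h with
  | ra => simp [A, B, Fp, Term.size, Term.sizeList]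
  | ra' => simp [A, B, Fp, Sp, Term.size, Term.sizeList]
  | rb => simp [B, Sp, Term.size, Term.sizeList]
  | cong hts _ ih =>
    simp only [Term.size]
    have := sizeList_set hts ih
    omega

lemma size_lt_of_transGen {t u : Tm}
    (h : Relation.TransGen (InnermostRewrite RR) t u) : t.size < u.size := by
  induction h with
  | single h => exact size_lt_of_st (rewrite_iff_st.1 (innermost_iff_rewrite.1 h))
  | tail _ h ih =>
    exact lt_trans ih (size_lt_of_st (rewrite_iff_st.1 (innermost_iff_rewrite.1 h)))

/-! ### Confluence of `St` -/

lemma lift_rtg {g : Sym} {ts : List Tm} {i : ℕ} (hi : i < ts.length) {y z : Tm}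
    (h : Relation.ReflTransGen St y z) :
    Relation.ReflTransGen St (Term.fn g (ts.set i y)) (Term.fn g (ts.set i z)) := by
  induction h with
  | refl => exact Relation.ReflTransGen.refl
  | @tail m z _ hmz ih =>
    refine ih.tail ?_
    have h0 : (ts.set i m)[i]? = some m := List.getElem?_set_self (by simpa using hi)
    have := St.cong (g := g) h0 hmz
    rwa [List.set_set] at this

lemma st_local {a b c : Tm} (h1 : St a b) (h2 : St a c) :
    ∃ d, Relation.ReflGen St b d ∧ Relation.ReflTransGen St c d := by
  induction h1 generalizing c with
  | ra =>
    cases h2 with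
    | ra => exact ⟨Fp B B, Relation.ReflGen.refl, Relation.ReflTransGen.refl⟩
    | ra' =>
      refine ⟨Fp B (Sp B), Relation.ReflGen.single ?_, Relation.ReflTransGen.refl⟩
      have h0 : ([B, B] : List Tm)[1]? = some B := rfl
      simpa [Fp] using St.cong (i := 1) h0 St.rb
    | cong hts _ => simp [A] at hts
  | ra' =>
    cases h2 with
    | ra =>
      refine ⟨Fp B (Sp B), Relation.ReflGen.refl, Relation.ReflTransGen.single ?_⟩
      have h0 : ([B, B] : List Tm)[1]? = some B := rfl
      simpa [Fp] using St.cong (i := 1) h0 St.rb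
    | ra' => exact ⟨Fp B (Sp B), Relation.ReflGen.refl, Relation.ReflTransGen.refl⟩
    | cong hts _ => simp [A] at hts
  | rb =>
    cases h2 with
    | rb => exact ⟨Sp B, Relation.ReflGen.refl, Relation.ReflTransGen.refl⟩
    | cong hts _ => simp [B] at hts
  | @cong g ts i t t' hts hst ih =>
    cases h2 with
    | ra => simp [A] at hts
    | ra' => simp [A] at hts
    | rb => simp [B] at hts
    | @cong g' ts' j y y' hts' hst' =>
      by_cases hij : i = j
      · subst hij
        rw [hts] at hts'
        obtain rfl := Option.some.inj hts'
        obtain ⟨d', hd1, hd2⟩ := ih hst'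
        have hi : i < ts.length := (List.getElem?_eq_some_iff.1 hts).1
        refine ⟨Term.fn g (ts.set i d'), ?_, lift_rtg hi hd2⟩
        cases hd1 with
        | refl => exact Relation.ReflGen.refl
        | single h =>
          refine Relation.ReflGen.single ?_
          have h0 : (ts.set i t')[i]? = some t' :=
            List.getElem?_set_self (by simpa using hi)
          have := St.cong (g := g) h0 h
          rwa [List.set_set] at this
      · refine ⟨Term.fn g ((ts.set i t').set j y'), ?_, ?_⟩
        · refine Relation.ReflGen.single ?_
          have h0 : (ts.set i t')[j]? = some y := by
            rw [List.getElem?_set_ne hij]; exact hts'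
          exact St.cong h0 hst'
        · refine Relation.ReflTransGen.single ?_
          have h0 : (ts.set j y')[i]? = some t := by
            rw [List.getElem?_set_ne (Ne.symm hij)]; exact hts
          have := St.cong (g := g) h0 hst
          rwa [List.set_comm _ _ (fun h => hij h.symm)] at this

lemma st_semi {a b c : Tm} (h1 : St a b) (h2 : Relation.ReflTransGen St a c) :
    ∃ d, Relation.ReflTransGen St b d ∧ Relation.ReflGen St c d := by
  induction h2 with
  | refl => exact ⟨b, Relation.ReflTransGen.refl, Relation.ReflGen.single h1⟩
  | @tail m c _ hmc ih =>
    obtain ⟨v, hv1, hv2⟩ := ih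
    cases hv2 with
    | refl => exact ⟨c, hv1.tail hmc, Relation.ReflGen.refl⟩
    | single h =>
      obtain ⟨d, hd1, hd2⟩ := st_local hmc h
      exact ⟨d, hv1.trans hd2, hd1⟩

lemma st_confluent : Confluent St := by
  intro a b c h1 h2
  induction h1 with
  | refl => exact ⟨c, h2, Relation.ReflTransGen.refl⟩
  | @tail m b _ hmb ih =>
    obtain ⟨v, hv1, hv2⟩ := ih
    obtain ⟨d, hd1, hd2⟩ := st_semi hmb hv1
    refine ⟨d, hd1, hv2.trans ?_⟩
    cases hd2 with
    | refl => exact Relation.ReflTransGen.refl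
    | single h => exact Relation.ReflTransGen.single h

lemma rewrite_confluent : Confluent (Rewrite RR) := by
  intro a b c h1 h2
  have e : ∀ {x y : Tm}, Relation.ReflTransGen (Rewrite RR) x y ↔
      Relation.ReflTransGen St x y :=
    fun {x y} => ⟨fun h => Relation.ReflTransGen.mono (fun _ _ hh => rewrite_iff_st.1 hh) _ _ h,
      fun h => Relation.ReflTransGen.mono (fun _ _ hh => rewrite_iff_st.2 hh) _ _ h⟩
  obtain ⟨d, hd1, hd2⟩ := st_confluent a b c (e.1 h1) (e.1 h2)
  exact ⟨d, e.2 hd1, e.2 hd2⟩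

lemma innermost_confluent : Confluent (InnermostRewrite RR) := by
  intro a b c h1 h2
  have e : ∀ {x y : Tm}, Relation.ReflTransGen (InnermostRewrite RR) x y ↔
      Relation.ReflTransGen (Rewrite RR) x y :=
    fun {x y} => ⟨fun h => Relation.ReflTransGen.mono (fun _ _ hh => innermost_iff_rewrite.1 hh) _ _ h,
      fun h => Relation.ReflTransGen.mono (fun _ _ hh => innermost_iff_rewrite.2 hh) _ _ h⟩
  obtain ⟨d, hd1, hd2⟩ := rewrite_confluent a b c (e.1 h1) (e.1 h2)
  exact ⟨d, e.2 hd1, e.2 hd2⟩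

/-! ### Non-confluence of parallel-innermost rewriting -/

def tow : ℕ → Tm
  | 0 => B
  | n + 1 => Sp (tow n)

lemma st_tow (n : ℕ) : St (tow n) (tow (n + 1)) := by
  induction n with
  | zero => exact St.rb
  | succ n ih =>
    have h0 : ([tow n] : List Tm)[0]? = some (tow n) := rfl
    simpa [tow, Sp] using St.cong h0 ih

lemma not_nf_tow (n : ℕ) : ¬ NormalForm RR (tow n) := fun h =>
  h ⟨tow (n + 1), rewrite_iff_st.2 (st_tow n)⟩

lemma size_tow (n : ℕ) : (tow n).size = n + 1 := by
  induction n with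
  | zero => simp [tow, B, Term.size, Term.sizeList]
  | succ n ih => simp [tow, Sp, Term.size, Term.sizeList, ih]; omega

lemma tow_injective {m n : ℕ} (h : tow m = tow n) : m = n := by
  have := congrArg Term.size h
  rw [size_tow, size_tow] at this
  omega

/-- Single-step inversion on towers. -/
lemma st_tow_inv : ∀ n {u : Tm}, St (tow n) u → u = tow (n + 1) := by
  intro n
  induction n with
  | zero =>
    intro u h
    rw [show tow 0 = Term.fn Sym.b [] from rfl] at h
    cases h with
    | rb => rfl
    | cong hts _ => simp at hts
  | succ n ih =>
    intro u h
    rw [show tow (n + 1) = Term.fn Sym.s [tow n] from rfl] at h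
    cases h with
    | @cong g ts i t t' hts hst =>
      cases i with
      | zero =>
        simp only [List.getElem?_cons_zero, Option.some.injEq] at hts
        subst hts
        rw [ih hst]
        rfl
      | succ i => simp at hts

lemma pin_tow : ∀ n {u : Tm}, ParInnermost RR (tow n) u → u = tow (n + 1) := by
  intro n
  induction n with
  | zero =>
    intro u h
    cases h with
    | redex htg hred hstep =>
      obtain ⟨π, r, hr, θ, h1, _, h2⟩ := hstep
      exact st_tow_inv 0 (rewrite_iff_st.1 ⟨π, r, hr, θ, h1, h2⟩)
    | congr f ss ts htg hlen hp =>
      -- here `Term.fn f ss = tow 0 = B`, so `ss = []` hence `ts = []`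
      exfalso
      have hts : ts = [] := List.length_eq_zero_iff.1 (by simpa using hlen.symm)
      subst hts
      exact absurd (size_lt_of_transGen htg) (by simp)
  | succ n ih =>
    intro u h
    cases h with
    | redex htg hred hstep =>
      exfalso
      rcases isRedex_iff.1 hred.1 with h' | h' <;>
        · rw [show tow (n + 1) = Term.fn Sym.s [tow n] from rfl] at h'
          simp [A, B] at h'
    | congr f ss ts htg hlen hp =>
      match ts, hlen with
      | [t1], _ =>
        have hpi : ParInnermost RR (tow n) t1 := by
          refine hp (tow n, t1) (by simp) ?_
          rintro ⟨_, hnf⟩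
          exact not_nf_tow n hnf
        rw [ih hpi]
        rfl

lemma pin_F {m n : ℕ} {u : Tm} (h : ParInnermost RR (Fp (tow m) (tow n)) u) :
    u = Fp (tow (m + 1)) (tow (n + 1)) := by
  cases h with
  | redex htg hred hstep =>
    exfalso
    rcases isRedex_iff.1 hred.1 with h' | h' <;> simp [Fp, A, B] at h'
  | congr f ss ts htg hlen hp =>
    match ts, hlen with
    | [t1, t2], _ =>
      have hp1 : ParInnermost RR (tow m) t1 := by
        refine hp (tow m, t1) (by simp) ?_
        rintro ⟨_, hnf⟩
        exact not_nf_tow m hnf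
      have hp2 : ParInnermost RR (tow n) t2 := by
        refine hp (tow n, t2) (by simp) ?_
        rintro ⟨_, hnf⟩
        exact not_nf_tow n hnf
      rw [pin_tow m hp1, pin_tow n hp2]
      rfl

lemma pin_reach {m n : ℕ} {v : Tm}
    (h : Relation.ReflTransGen (ParInnermost RR) (Fp (tow m) (tow n)) v) :
    ∃ k, v = Fp (tow (m + k)) (tow (n + k)) := by
  induction h with
  | refl => exact ⟨0, rfl⟩
  | @tail w v _ hwv ih =>
    obtain ⟨k, rfl⟩ := ih
    refine ⟨k + 1, ?_⟩
    rw [pin_F hwv, ← add_assoc, ← add_assoc]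

lemma pin_A1 : ParInnermost RR A (Fp B B) := by
  have hstep : InnermostRewrite RR A (Fp B B) :=
    innermost_iff_rewrite.2 (rewrite_iff_st.2 St.ra)
  exact ParInnermost.redex (Relation.TransGen.single hstep) innermost_A hstep

lemma pin_A2 : ParInnermost RR A (Fp B (Sp B)) := by
  have hstep : InnermostRewrite RR A (Fp B (Sp B)) :=
    innermost_iff_rewrite.2 (rewrite_iff_st.2 St.ra')
  exact ParInnermost.redex (Relation.TransGen.single hstep) innermost_A hstep

lemma pin_not_confluent : ¬ Confluent (ParInnermost RR) := by
  intro h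
  obtain ⟨v, h1, h2⟩ := h A (Fp B B) (Fp B (Sp B))
    (Relation.ReflTransGen.single pin_A1) (Relation.ReflTransGen.single pin_A2)
  have e1 : Fp B B = Fp (tow 0) (tow 0) := rfl
  have e2 : Fp B (Sp B) = Fp (tow 0) (tow 1) := rfl
  rw [e1] at h1; rw [e2] at h2
  obtain ⟨k, rfl⟩ := pin_reach h1
  obtain ⟨j, hj⟩ := pin_reach h2
  have hj' : Term.fn Sym.f [tow (0 + k), tow (0 + k)] =
      Term.fn Sym.f [tow (0 + j), tow (1 + j)] := hj
  injection hj' with _ hl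
  injection hl with ha hl'
  injection hl' with hb _
  have := tow_injective ha
  have := tow_injective hb
  omega

lemma wf_RR : IsWfTRS RR := by
  refine ⟨?_, ?_, ?_⟩
  · have : RR = insert r1 (insert r2 {r3}) := rfl
    rw [this]
    exact (((Set.finite_singleton r3).insert r2).insert r1)
  · rintro r hr ⟨x, hx⟩
    exact x.elim
  · intro r hr x
    exact x.elim

end Ex18

/-- There is a TRS `R` such that both `→_R` and `→i` are
confluent but `⇉` is not confluent. -/
theorem exists_trs_rewrite_innermost_confluent_parInnermost_not_confluent :
    ∃ (σ V : Type) (R : Set (Rule σ V)), IsWfTRS R ∧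
      Confluent (Rewrite R) ∧ Confluent (InnermostRewrite R) ∧
      ¬ Confluent (ParInnermost R) := by
  exact ⟨Ex18.Sym, Empty, Ex18.RR, Ex18.wf_RR, Ex18.rewrite_confluent,
    Ex18.innermost_confluent, Ex18.pin_not_confluent⟩

end ParallelComplexity
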